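/- There exists a complete and transitive relation ⪰ on X = [0,1]^ℕ satisfying strict Pareto and intergenerational equity, such that the set of pairs that are not strictly comparable is a Borel set of measure zero with respect to the product of the countable power of Lebesgue measure with itself. -/

import Mathlib

open MeasureTheory

def IsFinPerm (σ : ℕ → ℕ) : Prop :=
  Function.Bijective σ ∧ {n | σ n ≠ n}.Finite

/-- A measure on `[0,1]^ℕ` is the countable product of Lebesgue measure if all of its
finite-dimensional marginals are the corresponding finite products of Lebesgue measure. -/
def IsLebesguePowerMeasure (μ : Measure (ℕ → Set.Icc (0:ℝ) 1)) : Prop :=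
  ∀ n : ℕ, μ.map (fun x (i : Fin n) => x i) =
    Measure.pi (fun _ : Fin n => (volume : Measure (Set.Icc (0:ℝ) 1)))

abbrev Xs := ℕ → Set.Icc (0:ℝ) 1

lemma isFinPerm_id : IsFinPerm id := ⟨Function.bijective_id, by simp⟩

lemma IsFinPerm.comp {σ τ : ℕ → ℕ} (hσ : IsFinPerm σ) (hτ : IsFinPerm τ) :
    IsFinPerm (σ ∘ τ) := by
  refine ⟨hσ.1.comp hτ.1, ?_⟩
  refine ((hσ.2.union hτ.2).subset ?_)
  intro n hn
  by_contra h
  simp only [Set.mem_union, Set.mem_setOf_eq, not_or, not_not] at h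
  exact hn (by simp [Function.comp, h.2, h.1])

lemma IsFinPerm.inv {σ : ℕ → ℕ} (hσ : IsFinPerm σ) :
    ∃ τ : ℕ → ℕ, IsFinPerm τ ∧ (∀ n, σ (τ n) = n) ∧ (∀ n, τ (σ n) = n) := by
  let e := Equiv.ofBijective σ hσ.1
  refine ⟨e.symm, ⟨e.symm.bijective, ?_⟩, fun n => e.apply_symm_apply n,
    fun n => e.symm_apply_apply n⟩
  have : {n | e.symm n ≠ n} ⊆ σ '' {n | σ n ≠ n} := by
    intro n hn
    refine ⟨e.symm n, ?_, e.apply_symm_apply n⟩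
    simp only [Set.mem_setOf_eq] at hn ⊢
    rw [show σ (e.symm n) = n from e.apply_symm_apply n]
    exact fun h => hn h.symm
  exact (hσ.2.image σ).subset this

/-- If a finite permutation pointwise weakly increases a sequence, it fixes its values. -/
lemma finPerm_fix {π : ℕ → ℕ} (hπ : IsFinPerm π) (x : Xs)
    (h : ∀ n, (x n : ℝ) ≤ x (π n)) : ∀ n, (x n : ℝ) = x (π n) := by
  classical
  set s : Finset ℕ := hπ.2.toFinset with hs
  have hmem : ∀ n, n ∈ s ↔ π n ≠ n := by intro n; simp [hs]
  have hmaps : ∀ n ∈ s, π n ∈ s := by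
    intro n hn
    rw [hmem] at hn ⊢
    intro h2
    exact hn (hπ.1.1 h2)
  have hsum : ∑ n ∈ s, (x (π n) : ℝ) = ∑ n ∈ s, (x n : ℝ) := by
    refine Finset.sum_nbij' (i := fun n => π n) (j := fun n => Classical.choose (hπ.1.2 n))
      hmaps ?_ ?_ ?_ ?_
    · intro n hn
      rw [hmem]
      have hc := Classical.choose_spec (hπ.1.2 n)
      rw [hmem] at hn
      intro h2
      exact hn (by rw [hc.symm.trans h2]; exact h2)
    · intro n hn
      have hc := Classical.choose_spec (hπ.1.2 (π n))
      exact hπ.1.1 hc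
    · intro n hn
      exact Classical.choose_spec (hπ.1.2 n)
    · intro n hn; rfl
  have key : ∀ n ∈ s, (x n : ℝ) = x (π n) := by
    have := (Finset.sum_eq_sum_iff_of_le (fun n _ => h n)).1 hsum.symm
    intro n hn; exact this n hn
  intro n
  by_cases hn : n ∈ s
  · exact key n hn
  · rw [hmem] at hn; push_neg at hn; rw [hn]

def Par (x y : Xs) : Prop := ∃ σ, IsFinPerm σ ∧ ∀ n, (y n : ℝ) ≤ x (σ n)

lemma Par.refl (x : Xs) : Par x x := ⟨id, isFinPerm_id, fun n => le_rfl⟩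

lemma Par.trans {x y z : Xs} (h1 : Par x y) (h2 : Par y z) : Par x z := by
  obtain ⟨σ, hσ, h1⟩ := h1
  obtain ⟨τ, hτ, h2⟩ := h2
  exact ⟨σ ∘ τ, hσ.comp hτ, fun n => le_trans (h2 n) (h1 (τ n))⟩

/-- Mutual Pareto-dominance-up-to-permutation implies the sequences are permutations of
each other. -/
lemma par_antisymm {x y : Xs} (h1 : Par x y) (h2 : Par y x) :
    ∃ τ, IsFinPerm τ ∧ ∀ n, x n = y (τ n) := by
  obtain ⟨σ, hσ, hσle⟩ := h1
  obtain ⟨τ, hτ, hτle⟩ := h2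
  -- x n ≤ y (τ n) ≤ x (σ (τ n))
  have hfix := finPerm_fix (hσ.comp hτ) x (fun n => le_trans (hτle n) (hσle (τ n)))
  refine ⟨τ, hτ, fun n => ?_⟩
  have h1 : (x n : ℝ) ≤ y (τ n) := hτle n
  have h2 : (y (τ n) : ℝ) ≤ x (σ (τ n)) := hσle (τ n)
  have h3 : (x n : ℝ) = x (σ (τ n)) := hfix n
  exact Subtype.ext (le_antisymm h1 (by rw [h3]; exact h2))

lemma par_of_perm_eq {x y : Xs} {τ : ℕ → ℕ} (hτ : IsFinPerm τ) (h : ∀ n, x n = y (τ n)) :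
    Par x y ∧ Par y x := by
  obtain ⟨ρ, hρ, hρ1, hρ2⟩ := hτ.inv
  constructor
  · exact ⟨ρ, hρ, fun n => by rw [show x (ρ n) = y (τ (ρ n)) from h (ρ n), hρ1 n]⟩
  · exact ⟨τ, hτ, fun n => (h n).le⟩

def parSetoid : Setoid Xs :=
  ⟨fun x y => Par x y ∧ Par y x,
    ⟨fun x => ⟨Par.refl x, Par.refl x⟩, fun h => ⟨h.2, h.1⟩,
     fun h1 h2 => ⟨h1.1.trans h2.1, h2.2.trans h1.2⟩⟩⟩

def QPar : Quotient parSetoid → Quotient parSetoid → Prop :=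
  Quotient.lift₂ Par (by
    intro a b a' b' ha hb
    refine propext ⟨fun h => (ha.2.trans h).trans hb.1, fun h => (ha.1.trans h).trans hb.2⟩)

lemma QPar_mk (x y : Xs) : QPar (Quotient.mk parSetoid x) (Quotient.mk parSetoid y) = Par x y :=
  rfl

instance : IsPartialOrder (Quotient parSetoid) QPar where
  refl := by rintro ⟨x⟩; exact Par.refl x
  trans := by rintro ⟨x⟩ ⟨y⟩ ⟨z⟩ h1 h2; exact Par.trans h1 h2
  antisymm := by rintro ⟨x⟩ ⟨y⟩ h1 h2; exact Quotient.sound ⟨h1, h2⟩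

lemma icc_singleton_null (c : Set.Icc (0:ℝ) 1) :
    volume ({c} : Set (Set.Icc (0:ℝ) 1)) = 0 := by
  have h : ({c} : Set (Set.Icc (0:ℝ) 1)) = (Subtype.val ⁻¹' {(c:ℝ)}) := by
    ext y; simp [Subtype.ext_iff]
  rw [h, volume_preimage_coe nullMeasurableSet_Icc (measurableSet_singleton _)]
  exact le_antisymm (le_trans (measure_mono Set.inter_subset_left) (by simp)) zero_le

lemma coord_null {μ : Measure Xs} (hμ : IsLebesguePowerMeasure μ) (m : ℕ)
    (c : Set.Icc (0:ℝ) 1) : μ {y : Xs | y m = c} = 0 := by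
  classical
  have hg : Measurable (fun x : Xs => fun i : Fin (m+1) => x i) :=
    measurable_pi_lambda _ (fun i => measurable_pi_apply _)
  set m' : Fin (m+1) := ⟨m, Nat.lt_succ_self m⟩ with hm'
  set T : Set (Fin (m+1) → Set.Icc (0:ℝ) 1) :=
    Set.univ.pi (fun i => if i = m' then ({c} : Set (Set.Icc (0:ℝ) 1)) else Set.univ) with hT
  have hTm : MeasurableSet T := by
    refine MeasurableSet.univ_pi (fun i => ?_)
    by_cases h : i = m' <;> simp [h]
  have hpre : {y : Xs | y m = c} = (fun x : Xs => fun i : Fin (m+1) => x i) ⁻¹' T := by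
    ext y
    simp only [Set.mem_setOf_eq, Set.mem_preimage, hT, Set.mem_pi, Set.mem_univ, true_implies]
    constructor
    · intro h i
      by_cases hi : i = m'
      · subst hi; simpa [hm'] using h
      · simp [hi]
    · intro h
      have := h m'
      simpa [hm'] using this
  rw [hpre, ← Measure.map_apply hg hTm, hμ (m+1), hT, Measure.pi_pi]
  refine Finset.prod_eq_zero (Finset.mem_univ m') ?_
  simp [icc_singleton_null c]

lemma prob_of_power {μ : Measure Xs} (hμ : IsLebesguePowerMeasure μ) :
    IsProbabilityMeasure μ := by
  constructor
  have hg : Measurable (fun x : Xs => fun i : Fin 0 => x i) :=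
    measurable_pi_lambda _ (fun i => measurable_pi_apply _)
  have h0 := hμ 0
  have : μ.map (fun x (i : Fin 0) => x i) Set.univ = μ Set.univ := by
    rw [Measure.map_apply hg MeasurableSet.univ, Set.preimage_univ]
  rw [← this, h0]
  exact measure_univ

lemma finPerm_countable : {σ : ℕ → ℕ | IsFinPerm σ}.Countable := by
  have hsub : {σ : ℕ → ℕ | IsFinPerm σ} ⊆ ⋃ N : ℕ, {σ | ∀ n, N ≤ n → σ n = n} := by
    intro σ hσ
    obtain ⟨N, hN⟩ := hσ.2.bddAbove
    refine Set.mem_iUnion.2 ⟨N + 1, fun n hn => ?_⟩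
    by_contra h
    exact absurd (hN h) (by omega)
  refine Set.Countable.mono hsub (Set.countable_iUnion (fun N => ?_))
  rw [← Set.countable_coe_iff]
  have hinj : Function.Injective
      (fun σ : {σ : ℕ → ℕ | ∀ n, N ≤ n → σ n = n} => fun i : Fin N => σ.1 i) := by
    rintro ⟨σ, hσ⟩ ⟨τ, hτ⟩ h
    ext n
    by_cases hn : n < N
    · exact congrFun h ⟨n, hn⟩
    · show σ n = τ n
      rw [hσ n (by omega), hτ n (by omega)]
  exact hinj.countable

lemma permGraph_measurable (τ : ℕ → ℕ) :
    MeasurableSet {p : Xs × Xs | ∀ n, (p.1 n : ℝ) = p.2 (τ n)} := by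
  have h : {p : Xs × Xs | ∀ n, (p.1 n : ℝ) = p.2 (τ n)}
      = ⋂ n, {p : Xs × Xs | (p.1 n : ℝ) = p.2 (τ n)} := by
    ext p; simp
  rw [h]
  refine MeasurableSet.iInter (fun n => ?_)
  exact measurableSet_eq_fun
    (measurable_subtype_coe.comp ((measurable_pi_apply n).comp measurable_fst))
    (measurable_subtype_coe.comp ((measurable_pi_apply (τ n)).comp measurable_snd))

/-- There is a complete and transitive relation on `[0,1]^ℕ` satisfying strict Pareto and
intergenerational equity such that the set of pairs that are not strictly comparable is a
Borel set of measure zero with respect to the product of the countable power of Lebesgue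
measure with itself. -/
theorem exists_decisive_equitable_order_unitInterval :
    ∃ R : (ℕ → Set.Icc (0:ℝ) 1) → (ℕ → Set.Icc (0:ℝ) 1) → Prop,
      Total R ∧ Transitive R ∧
      (∀ x y : ℕ → Set.Icc (0:ℝ) 1, (∀ n, (y n : ℝ) ≤ x n) → x ≠ y → (R x y ∧ ¬ R y x)) ∧
      (∀ (x : ℕ → Set.Icc (0:ℝ) 1) (σ : ℕ → ℕ), IsFinPerm σ →
        (R x (x ∘ σ) ∧ R (x ∘ σ) x)) ∧
      MeasurableSet {p : (ℕ → Set.Icc (0:ℝ) 1) × (ℕ → Set.Icc (0:ℝ) 1) |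
          ¬ (R p.1 p.2 ∧ ¬ R p.2 p.1) ∧ ¬ (R p.2 p.1 ∧ ¬ R p.1 p.2)} ∧
      ∀ μ : Measure (ℕ → Set.Icc (0:ℝ) 1), IsLebesguePowerMeasure μ →
        (μ.prod μ) {p : (ℕ → Set.Icc (0:ℝ) 1) × (ℕ → Set.Icc (0:ℝ) 1) |
          ¬ (R p.1 p.2 ∧ ¬ R p.2 p.1) ∧ ¬ (R p.2 p.1 ∧ ¬ R p.1 p.2)} = 0 := by
  classical
  obtain ⟨s, hlin, hext⟩ := extend_partialOrder QPar
  haveI := hlin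
  set q : Xs → Quotient parSetoid := Quotient.mk parSetoid with hq
  set R : Xs → Xs → Prop := fun x y => s (q x) (q y) with hR
  -- mutual R implies permutation-equality
  have hmutual : ∀ x y : Xs, R x y → R y x → ∃ τ, IsFinPerm τ ∧ ∀ n, x n = y (τ n) := by
    intro x y h1 h2
    have heq : q x = q y := hlin.1.2.1 _ _ h1 h2
    have hE := Quotient.exact heq
    exact par_antisymm hE.1 hE.2
  have hEparR : ∀ x y : Xs, (∃ τ, IsFinPerm τ ∧ ∀ n, x n = y (τ n)) → R x y ∧ R y x := by
    intro x y ⟨τ, hτ, h⟩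
    have hE := par_of_perm_eq hτ h
    have heq : q x = q y := Quotient.sound hE
    constructor
    · show s (q x) (q y); rw [heq]; exact refl_of s _
    · show s (q y) (q x); rw [heq]; exact refl_of s _
  have hset : {p : Xs × Xs | ¬(R p.1 p.2 ∧ ¬R p.2 p.1) ∧ ¬(R p.2 p.1 ∧ ¬R p.1 p.2)}
      = ⋃ τ ∈ {σ : ℕ → ℕ | IsFinPerm σ}, {p : Xs × Xs | ∀ n, (p.1 n : ℝ) = p.2 (τ n)} := by
    ext ⟨x, y⟩
    simp only [Set.mem_setOf_eq, Set.mem_iUnion]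
    constructor
    · rintro ⟨h1, h2⟩
      have htot := hlin.2.1 (q x) (q y)
      have hboth : R x y ∧ R y x := by
        rcases htot with h | h
        · exact ⟨h, by by_contra hc; exact h1 ⟨h, hc⟩⟩
        · exact ⟨by by_contra hc; exact h2 ⟨h, hc⟩, h⟩
      obtain ⟨τ, hτ, hp⟩ := hmutual x y hboth.1 hboth.2
      exact ⟨τ, hτ, fun n => by rw [hp n]⟩
    · rintro ⟨τ, hτ, hp⟩
      have hboth := hEparR x y ⟨τ, hτ, fun n => Subtype.ext (hp n)⟩
      exact ⟨fun h => h.2 hboth.2, fun h => h.2 hboth.1⟩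
  refine ⟨R, ?_, ?_, ?_, ?_, ?_, ?_⟩
  · exact fun x y => hlin.2.1 (q x) (q y)
  · exact fun a b c h1 h2 => hlin.1.1.2.1 _ _ _ h1 h2
  · -- strict Pareto
    intro x y hle hne
    have hP : Par x y := ⟨id, isFinPerm_id, hle⟩
    have hRxy : R x y := hext _ _ hP
    refine ⟨hRxy, fun hRyx => ?_⟩
    obtain ⟨τ, hτ, hperm⟩ := hmutual y x hRyx hRxy
    obtain ⟨ρ, hρ, hρ1, hρ2⟩ := hτ.inv
    have hxle : ∀ m, (x m : ℝ) ≤ x (ρ m) := by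
      intro m
      calc (x m : ℝ) = y (ρ m) := by rw [hperm (ρ m), hρ1 m]
        _ ≤ x (ρ m) := hle (ρ m)
    have hfix := finPerm_fix hρ x hxle
    apply hne
    funext m
    have h1 : (x (τ m) : ℝ) = x (ρ (τ m)) := hfix (τ m)
    rw [hρ2 m] at h1
    exact Subtype.ext (by rw [hperm m]; exact h1.symm)
  · -- equity
    intro x σ hσ
    obtain ⟨ρ, hρ, hρ1, hρ2⟩ := hσ.inv
    refine hEparR x (x ∘ σ) ⟨ρ, hρ, fun n => ?_⟩
    show x n = x (σ (ρ n))
    rw [hρ1 n]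
  · rw [hset]
    exact MeasurableSet.biUnion finPerm_countable (fun τ _ => permGraph_measurable τ)
  · intro μ hμ
    haveI := prob_of_power hμ
    rw [hset]
    rw [measure_biUnion_null_iff finPerm_countable]
    intro τ hτ
    rw [Measure.prod_apply (permGraph_measurable τ)]
    have hsec : ∀ x : Xs,
        μ (Prod.mk x ⁻¹' {p : Xs × Xs | ∀ n, (p.1 n : ℝ) = p.2 (τ n)}) = 0 := by
      intro x
      refine measure_mono_null ?_ (coord_null hμ (τ 0) (x 0))
      intro y hy
      exact Subtype.ext (hy 0).symm
    simp only [hsec, lintegral_zero]
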